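/- Let A₁ be symmetric positive definite on ℝ^{n_I+n_B} with ⟨A₁w, w⟩ ≥ α₁β₁ ‖w_B‖_M² (w_B the second block of w), M symmetric positive definite on ℝ^{n_B}, and define Ã₁ = A₁ + diag(0, M) (adding M to the (B,B)-block). If Ã₁ e₁ = (0, M e₂^{prev})ᵀ for some e₁ = (e_{1,I}, e_{1,B}) and e₂^{prev} ∈ ℝ^{n_B}, then ‖e_{1,B}‖_M ≤ r ‖e₂^{prev}‖_M with r = 1/(1 + α₁ β₁) < 1. -/

import Mathlib

open Matrix in
lemma cs_psd {n : ℕ} (M : Matrix (Fin n) (Fin n) ℝ) (hM : M.PosSemidef)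
    (x y : Fin n → ℝ) :
    (M.mulVec x ⬝ᵥ y)^2 ≤ (M.mulVec x ⬝ᵥ x) * (M.mulVec y ⬝ᵥ y) := by
  have hMt : Mᵀ = M := (by simpa using hM.1 : M.IsSymm).eq
  have hsym : ∀ u v : Fin n → ℝ, M.mulVec u ⬝ᵥ v = M.mulVec v ⬝ᵥ u := by
    intro u v
    rw [dotProduct_comm, dotProduct_mulVec, ← hMt, vecMul_transpose, hMt]
  have key : ∀ t : ℝ, 0 ≤ (M.mulVec y ⬝ᵥ y) * (t*t) + (2 * (M.mulVec x ⬝ᵥ y)) * t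
      + (M.mulVec x ⬝ᵥ x) := by
    intro t
    have h0 : 0 ≤ M.mulVec (x + t • y) ⬝ᵥ (x + t • y) := by
      have := hM.dotProduct_mulVec_nonneg (x + t • y)
      simpa [dotProduct_comm, star_trivial] using this
    have hexp : M.mulVec (x + t • y) ⬝ᵥ (x + t • y)
        = (M.mulVec y ⬝ᵥ y) * (t*t) + (2 * (M.mulVec x ⬝ᵥ y)) * t + (M.mulVec x ⬝ᵥ x) := by
      simp only [mulVec_add, mulVec_smul, add_dotProduct, dotProduct_add, smul_dotProduct,
        dotProduct_smul, smul_eq_mul]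
      rw [hsym y x]; ring
    rw [hexp] at h0
    exact h0
  have hd := discrim_le_zero key
  rw [discrim] at hd
  nlinarith [hd]

open Matrix in
/-- First half of Lemma 5.2: contraction of the interface error in one
Gauss–Seidel half-step on subdomain Ω₁, with rate r = 1/(1+α₁β₁). -/
theorem stmt8 {nI nB : ℕ}
    (A₁ : Matrix (Fin nI ⊕ Fin nB) (Fin nI ⊕ Fin nB) ℝ) (hA₁ : A₁.PosDef)
    (M : Matrix (Fin nB) (Fin nB) ℝ) (hM : M.PosDef)
    (α₁ β₁ : ℝ) (hα : 0 < α₁) (hβ : 0 < β₁)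
    (hcoer : ∀ w : Fin nI ⊕ Fin nB → ℝ,
      α₁ * β₁ * (M.mulVec (w ∘ Sum.inr) ⬝ᵥ (w ∘ Sum.inr)) ≤ A₁.mulVec w ⬝ᵥ w)
    (e₁ : Fin nI ⊕ Fin nB → ℝ) (e₂prev : Fin nB → ℝ)
    (heq : (A₁ + Matrix.fromBlocks 0 0 0 M).mulVec e₁ = Sum.elim (0 : Fin nI → ℝ) (M.mulVec e₂prev)) :
    Real.sqrt (M.mulVec (e₁ ∘ Sum.inr) ⬝ᵥ (e₁ ∘ Sum.inr))
      ≤ (1 / (1 + α₁ * β₁)) * Real.sqrt (M.mulVec e₂prev ⬝ᵥ e₂prev)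
    ∧ 1 / (1 + α₁ * β₁) < 1 := by
  set x : Fin nB → ℝ := e₁ ∘ Sum.inr with hx
  set t : ℝ := M.mulVec x ⬝ᵥ x with ht
  set s : ℝ := M.mulVec e₂prev ⬝ᵥ e₂prev with hs
  have hc : (0:ℝ) < 1 + α₁ * β₁ := by positivity
  have hM2 : ∀ v, 0 ≤ M.mulVec v ⬝ᵥ v := fun v => by
    have := hM.posSemidef.dotProduct_mulVec_nonneg v; simpa [dotProduct_comm, star_trivial] using this
  have ht0 : 0 ≤ t := hM2 x
  have hs0 : 0 ≤ s := hM2 e₂prev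
  -- dot heq with e₁
  have hdot := congrArg (fun v => v ⬝ᵥ e₁) heq
  simp only [add_mulVec, add_dotProduct] at hdot
  have hblock : (Matrix.fromBlocks 0 0 0 M).mulVec e₁ ⬝ᵥ e₁ = t := by
    have h : e₁ = Sum.elim (e₁ ∘ Sum.inl) (e₁ ∘ Sum.inr) := (Sum.elim_comp_inl_inr e₁).symm
    conv_lhs => rw [h, Matrix.fromBlocks_mulVec, sumElim_dotProduct_sumElim]
    simp [ht, hx]
  have hrhs : Sum.elim (0 : Fin nI → ℝ) (M.mulVec e₂prev) ⬝ᵥ e₁ = M.mulVec e₂prev ⬝ᵥ x := by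
    have h : e₁ = Sum.elim (e₁ ∘ Sum.inl) (e₁ ∘ Sum.inr) := (Sum.elim_comp_inl_inr e₁).symm
    conv_lhs => rw [h, sumElim_dotProduct_sumElim]
    simp [hx]
  rw [hblock, hrhs] at hdot
  have hA := hcoer e₁
  have hkey : (1 + α₁ * β₁) * t ≤ M.mulVec e₂prev ⬝ᵥ x := by
    rw [← hdot]; nlinarith [hA]
  have hcs := cs_psd M hM.posSemidef e₂prev x
  refine ⟨?_, by rw [div_lt_one hc]; nlinarith⟩
  rcases eq_or_lt_of_le ht0 with h0 | hpos
  · rw [← h0, Real.sqrt_zero]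
    positivity
  · rw [← hs, ← ht] at hcs
    have hp : 0 ≤ M.mulVec e₂prev ⬝ᵥ x := le_trans (by positivity) hkey
    have h2 : (1 + α₁ * β₁)^2 * t ≤ s := by
      nlinarith [mul_le_mul hkey hkey (by positivity) hp, hcs, hpos]
    have h3 : t ≤ s / (1 + α₁ * β₁)^2 := by
      rw [le_div_iff₀ (by positivity)]; nlinarith
    calc Real.sqrt t ≤ Real.sqrt (s / (1 + α₁ * β₁)^2) := Real.sqrt_le_sqrt h3
      _ = Real.sqrt s / (1 + α₁ * β₁) := by
          rw [Real.sqrt_div hs0, Real.sqrt_sq hc.le]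
      _ = (1 / (1 + α₁ * β₁)) * Real.sqrt s := by ring
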